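/- Let S be a commutative ring and Ch(S) the category of nonnegatively graded chain complexes of S-modules, with generating cofibrations J the boundary inclusions ∂_i → 2_i for i ∈ ℕ. For a chain complex X, define a chain complex QX, free in every dimension, with: generators [x] of (QX)_0 for x ∈ X_0, with ε_0([x]) = x; and generators [x, z] of (QX)_{i+1} for x ∈ X_{i+1} and z a cycle of (QX)_i with ε_i(z) = d_{i+1}(x), with ε_{i+1}([x,z]) = x and differential d_{i+1}([x,z]) = z. Then ε_X : QX → X is the universal cofibrant replacement of X with respect to J: equipped with the choice of liftings given by inclusion of generators, it is an initial object of AAF/X. -/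

import Mathlib

/-!
STATEMENT 5: For a commutative ring `S` and the category `Ch(S)` of
nonnegatively graded chain complexes of `S`-modules with generating
cofibrations the boundary inclusions `∂_i → 2_i`, the complex `QX` (free in
every dimension, on generators `[x]` in dimension 0 and `[x, z]` in dimension
`i+1`, with `ε[x] = x`, `ε[x,z] = x`, `d[x,z] = z`) is the universal cofibrant
replacement of `X`: equipped with the choice of liftings given by inclusion of
generators, `ε_X : QX → X` is an initial object of `AAF/X`.
-/

open CategoryTheory Limits

universe u

namespace Statement5

variable (S : Type) [CommRing S]

/-- The category `Ch(S)` of nonnegatively graded chain complexes of `S`-modules. -/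
abbrev Ch := ChainComplex (ModuleCat.{0} S) ℕ

/-! ## The disc and boundary complexes and the generating cofibrations -/

/-- The components of the disc complex `2_i`: `S` in degrees `i` and `i-1`. -/
def dObj (i n : ℕ) : ModuleCat.{0} S :=
  if n = i ∨ n + 1 = i then ModuleCat.of S S else ModuleCat.of S PUnit

/-- The differential of `2_i` (the identity of `S`, from degree `i` to `i-1`). -/
def dD (i n : ℕ) : dObj S i (n + 1) ⟶ dObj S i n :=
  if h : n + 1 = i then eqToHom (by simp [dObj, h]) else 0

/-- The disc complex `2_i`. -/
noncomputable def disc (i : ℕ) : Ch S :=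
  ChainComplex.of (dObj S i) (dD S i)
    (by
      intro n
      unfold dD
      by_cases h : n + 1 = i
      · have h2 : ¬(n + 1 + 1 = i) := by omega
        rw [dif_neg h2, zero_comp]
      · rw [dif_neg h, comp_zero])

/-- The components of the boundary complex `∂_i`: `S` in degree `i-1`. -/
def bObj (i n : ℕ) : ModuleCat.{0} S :=
  if n + 1 = i then ModuleCat.of S S else ModuleCat.of S PUnit

/-- The boundary complex `∂_i` (with zero differential). -/
noncomputable def bdry (i : ℕ) : Ch S :=
  ChainComplex.of (bObj S i) (fun _ => 0) (by intro n; rw [zero_comp])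

/-- The components of the boundary inclusion. -/
def inclApp (i n : ℕ) : bObj S i n ⟶ dObj S i n :=
  if h : n + 1 = i then eqToHom (by simp [bObj, dObj, h]) else 0

/-- The generating cofibration `ι_i : ∂_i ⟶ 2_i`. -/
noncomputable def incl (i : ℕ) : bdry S i ⟶ disc S i :=
  ChainComplex.ofHom (X := bdry S i) (Y := disc S i) (inclApp S i)
    (by
      intro n
      show inclApp S i (n + 1) ≫ ChainComplex.of.d _ (dD S i) (n + 1) n
        = ChainComplex.of.d _ (fun _ => (0 : bObj S i (_ + 1) ⟶ bObj S i _)) (n + 1) n ≫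
          inclApp S i n
      rw [ChainComplex.of_d, ChainComplex.of_d]
      unfold inclApp dD
      by_cases h : n + 1 = i
      · have h2 : ¬(n + 1 + 1 = i) := by omega
        rw [dif_neg h2, zero_comp, zero_comp]
      · rw [dif_neg h, comp_zero, zero_comp])

/-! ## The universal cofibrant replacement `QX` -/

variable (X : Ch S)

/-- Data of level `i` of the construction of `QX`: the set `G` of free
generators of `(QX)_i`, the counit `ε_i : (QX)_i = (G →₀ S) → X_i`, and the
submodule of cycles `Z(QX)_i`. -/
structure QLevel (i : ℕ) : Type 1 where
  G : Type
  eps : (G →₀ S) →ₗ[S] X.X i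
  Z : Submodule S (G →₀ S)

/-- The recursive construction of the levels of `QX`:
* `(QX)_0` is free on generators `[x]` for `x ∈ X_0`, with `ε_0 [x] = x` (and
  every `0`-chain a cycle);
* `(QX)_{i+1}` is free on generators `[x, z]` for `x ∈ X_{i+1}` and
  `z ∈ Z(QX)_i` with `ε_i z = d_{i+1} x`, with `ε_{i+1} [x, z] = x` and with the
  cycles `Z(QX)_{i+1}` the kernel of the differential `d_{i+1} : [x, z] ↦ z`. -/
noncomputable def qStep : ∀ i : ℕ, QLevel S X i
  | 0 =>
    { G := X.X 0
      eps := Finsupp.linearCombination S (id : (X.X 0 : Type) → X.X 0)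
      Z := ⊤ }
  | (i + 1) =>
    let p := qStep i
    { G := {q : (X.X (i + 1) : Type) × p.Z // p.eps q.2.1 = X.d (i + 1) i q.1}
      eps := Finsupp.linearCombination S (fun g => g.1.1)
      Z := LinearMap.ker
        (Finsupp.linearCombination S (fun g : {q : (X.X (i + 1) : Type) × p.Z //
          p.eps q.2.1 = X.d (i + 1) i q.1} => (g.1.2.1 : p.G →₀ S))) }

/-- The generators of `(QX)_i`. -/
noncomputable def QGen (i : ℕ) : Type := (qStep S X i).G

/-- Destructor for generators of `(QX)_{i+1}`. -/
noncomputable def qDestruct (i : ℕ) (g : QGen S X (i + 1)) :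
    {q : (X.X (i + 1) : Type) × (qStep S X i).Z //
      (qStep S X i).eps q.2.1 = X.d (i + 1) i q.1} := g

/-- The generator `[x, z]` of `(QX)_{i+1}`. -/
noncomputable def qGenMk (i : ℕ) (x : X.X (i + 1)) (z : (qStep S X i).Z)
    (h : (qStep S X i).eps z.1 = X.d (i + 1) i x) : QGen S X (i + 1) :=
  show {q : (X.X (i + 1) : Type) × (qStep S X i).Z //
      (qStep S X i).eps q.2.1 = X.d (i + 1) i q.1} from ⟨(x, z), h⟩

/-- The differential of `QX`: `d_{i+1} [x, z] = z`. -/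
noncomputable def Qd (i : ℕ) : (QGen S X (i + 1) →₀ S) →ₗ[S] (QGen S X i →₀ S) :=
  Finsupp.linearCombination S (fun g => (qDestruct S X i g).1.2.1)

theorem qZ_succ (i : ℕ) : (qStep S X (i + 1)).Z = LinearMap.ker (Qd S X i) := rfl

theorem mem_qZ_zero (v : QGen S X 0 →₀ S) : v ∈ (qStep S X 0).Z :=
  trivial

theorem mem_qZ_succ (i : ℕ) (v : QGen S X (i + 1) →₀ S) (hv : Qd S X i v = 0) :
    v ∈ (qStep S X (i + 1)).Z := by
  rw [qZ_succ]; exact LinearMap.mem_ker.mpr hv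

theorem Qd_single (i : ℕ) (g : QGen S X (i + 1)) (b : S) :
    Qd S X i (Finsupp.single g b) = b • (qDestruct S X i g).1.2.1 := by
  show Finsupp.linearCombination S (fun g => (qDestruct S X i g).1.2.1)
      (Finsupp.single g b) = _
  rw [Finsupp.linearCombination_single]

theorem Qd_comp (i : ℕ) : (Qd S X i).comp (Qd S X (i + 1)) = 0 := by
  apply Finsupp.lhom_ext
  intro g b
  show Qd S X i (Qd S X (i + 1) (Finsupp.single g b)) = 0
  rw [Qd_single]
  erw [map_smul]
  have hz2 : Qd S X i ((qDestruct S X (i + 1) g)).1.2.1 = 0 :=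
    LinearMap.mem_ker.mp (by exact (qDestruct S X (i + 1) g).1.2.2)
  rw [hz2, smul_zero]

/-- The chain complex `QX`: free in every dimension on the generators above. -/
noncomputable def Qc : Ch S :=
  ChainComplex.of (fun i => ModuleCat.of S (QGen S X i →₀ S))
    (fun i => ModuleCat.ofHom (Qd S X i))
    (fun n => ModuleCat.hom_ext (Qd_comp S X n))

theorem Qc_d (j : ℕ) (v : QGen S X (j + 1) →₀ S) :
    (Qc S X).d (j + 1) j v = Qd S X j v :=
  by
    have e : (Qc S X).d (j + 1) j = ModuleCat.ofHom (Qd S X j) :=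
      ChainComplex.of_d (fun i => ModuleCat.of S (QGen S X i →₀ S)) (fun i => ModuleCat.ofHom (Qd S X i)) j
    rw [e]; rfl

theorem eps_single (j : ℕ) (g : QGen S X (j + 1)) (b : S) :
    (qStep S X (j + 1)).eps (Finsupp.single g b) = b • (qDestruct S X j g).1.1 := by
  show Finsupp.linearCombination S _ (Finsupp.single g b) = _
  erw [Finsupp.linearCombination_single]
  rfl

/-- The counit `ε_X : QX ⟶ X`. -/
noncomputable def Qeps : Qc S X ⟶ X where
  f i := ModuleCat.ofHom (X := QGen S X i →₀ S) (Y := X.X i) (qStep S X i).eps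
  comm' := by
    rintro i j hij
    obtain rfl : j + 1 = i := hij
    refine ModuleCat.hom_ext (Finsupp.lhom_ext fun g b => ?_)
    show X.d (j + 1) j ((qStep S X (j + 1)).eps (Finsupp.single g b))
        = (qStep S X j).eps ((Qc S X).d (j + 1) j (Finsupp.single g b))
    rw [eps_single, Qc_d, Qd_single, map_smul, map_smul, (qDestruct S X j g).2]


/-! ## Choices of liftings and the canonical (inclusion-of-generators) liftings -/

/-- A choice of liftings for a chain map `f : Y ⟶ Z` with respect to the
generating cofibrations `ι_i : ∂_i → 2_i`: an assignment of chosen diagonal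
fillers for all commutative squares.  The pair `(f, φ)` is an object of
`AAF/Z`. -/
structure ChLiftChoice {Y Z : Ch S} (f : Y ⟶ Z) : Type where
  lift : ∀ (i : ℕ) (h : bdry S i ⟶ Y) (k : disc S i ⟶ Z),
    h ≫ f = incl S i ≫ k → (disc S i ⟶ Y)
  fac_left : ∀ (i : ℕ) (h : bdry S i ⟶ Y) (k : disc S i ⟶ Z)
      (w : h ≫ f = incl S i ≫ k), incl S i ≫ lift i h k w = h
  fac_right : ∀ (i : ℕ) (h : bdry S i ⟶ Y) (k : disc S i ⟶ Z)
      (w : h ≫ f = incl S i ≫ k), lift i h k w ≫ f = k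

/-- The composite choice of liftings `(φ • ψ)(j, h, k) = φ(j, h, ψ(j, f∘h, k))`
on a composite `f ≫ g`. -/
noncomputable def ChLiftChoice.comp {A B C : Ch S} {f : A ⟶ B} {g : B ⟶ C}
    (φ : ChLiftChoice S f) (ψ : ChLiftChoice S g) : ChLiftChoice S (f ≫ g) where
  lift i h k w :=
    φ.lift i h (ψ.lift i (h ≫ f) k (by rw [Category.assoc]; exact w))
      ((ψ.fac_left i (h ≫ f) k _).symm)
  fac_left i h k w := φ.fac_left i h _ _
  fac_right i h k w := by
    rw [← Category.assoc, φ.fac_right, ψ.fac_right]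

/-- The element `1 ∈ S`, placed in the top level of the disc complex. -/
noncomputable def discOneMap (i : ℕ) : ModuleCat.of S S ⟶ (disc S i).X i :=
  eqToHom (show ModuleCat.of S S = dObj S i i by simp [dObj])

/-- The canonical generator `1 ∈ S` of the top level of the disc complex. -/
noncomputable def discOne (i : ℕ) : ((disc S i).X i : Type) := discOneMap S i (1 : S)

/-- The element `1 ∈ S`, placed in degree `i` of the boundary complex `∂_{i+1}`. -/
noncomputable def bdryOneMap (i : ℕ) : ModuleCat.of S S ⟶ (bdry S (i + 1)).X i :=
  eqToHom (show ModuleCat.of S S = bObj S (i + 1) i by simp [bObj])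

/-- The canonical generator `1 ∈ S` of the boundary complex `∂_{i+1}` in
degree `i`. -/
noncomputable def bdryOne (i : ℕ) : ((bdry S (i + 1)).X i : Type) :=
  bdryOneMap S i (1 : S)

theorem incl_one_map_eq (i : ℕ) :
    bdryOneMap S i ≫ (incl S (i + 1)).f i
      = discOneMap S (i + 1) ≫ (disc S (i + 1)).d (i + 1) i := by
  have e1 : (incl S (i + 1)).f i = inclApp S (i + 1) i := rfl
  have e2 : (disc S (i + 1)).d (i + 1) i = dD S (i + 1) i :=
    ChainComplex.of_d _ _ i
  rw [e1, e2]
  unfold inclApp dD bdryOneMap discOneMap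
  rw [dif_pos rfl, dif_pos rfl]
  erw [eqToHom_trans, eqToHom_trans]

theorem incl_one_eq_d_one (i : ℕ) :
    (incl S (i + 1)).f i (bdryOne S i)
      = (disc S (i + 1)).d (i + 1) i (discOne S (i + 1)) :=
  ConcreteCategory.congr_hom (incl_one_map_eq S i) (1 : S)

variable (X : Ch S)

theorem bdryCycleMem (i : ℕ) (h : bdry S (i + 1) ⟶ Qc S X) :
    h.f i (bdryOne S i) ∈ (qStep S X i).Z := by
  cases i with
  | zero => exact mem_qZ_zero S X _
  | succ j =>
    apply mem_qZ_succ
    have hz : (bdry S (j + 1 + 1)).d (j + 1) j = 0 :=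
      ChainComplex.of_d (bObj S (j + 1 + 1)) (fun _ => 0) j
    have hone : ((bdry S (j + 1 + 1)).d (j + 1) j) (bdryOne S (j + 1)) = (0 : _) := by
      rw [hz]; rfl
    have hc := ConcreteCategory.congr_hom (h.comm (j + 1) j) (bdryOne S (j + 1))
    have hc' : (Qc S X).d (j + 1) j (h.f (j + 1) (bdryOne S (j + 1)))
        = h.f j (((bdry S (j + 1 + 1)).d (j + 1) j) (bdryOne S (j + 1))) := hc
    erw [← Qc_d]
    rw [hc', hone, map_zero]
    rfl

theorem canon_compat (i : ℕ) (h : bdry S (i + 1) ⟶ Qc S X) (k : disc S (i + 1) ⟶ X)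
    (w : h ≫ Qeps S X = incl S (i + 1) ≫ k) :
    (qStep S X i).eps (h.f i (bdryOne S i)) = X.d (i + 1) i (k.f (i + 1) (discOne S (i + 1))) := by
  have hcomp := congrArg (fun m => HomologicalComplex.Hom.f m i) w
  simp only [HomologicalComplex.comp_f] at hcomp
  have hw : (qStep S X i).eps (h.f i (bdryOne S i))
      = k.f i ((incl S (i + 1)).f i (bdryOne S i)) :=
    ConcreteCategory.congr_hom hcomp (bdryOne S i)
  have hk : X.d (i + 1) i (k.f (i + 1) (discOne S (i + 1)))
      = k.f i ((disc S (i + 1)).d (i + 1) i (discOne S (i + 1))) :=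
    ConcreteCategory.congr_hom (k.comm (i + 1) i) (discOne S (i + 1))
  rw [hw, incl_one_eq_d_one, ← hk]

/-- The canonical generator associated to a lifting problem against `ε_X`:
`[x]` in dimension `0` and `[x, z]` in dimension `i + 1`, where `x` is
classified by `k` and `z` by `h`. -/
noncomputable def canonGen : ∀ (i : ℕ) (h : bdry S i ⟶ Qc S X) (k : disc S i ⟶ X),
    h ≫ Qeps S X = incl S i ≫ k → QGen S X i
  | 0, _, k, _ => show (qStep S X 0).G from k.f 0 (discOne S 0)
  | (i + 1), h, k, w =>
      qGenMk S X i (k.f (i + 1) (discOne S (i + 1)))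
        ⟨h.f i (bdryOne S i), bdryCycleMem S X i h⟩
        (canon_compat S X i h k w)

/-! ## Auxiliary machinery added for the proof -/

theorem elem_eq_zero_of_punit {M : ModuleCat.{0} S} (e : ModuleCat.of S PUnit = M)
    (x : M) : x = 0 := by
  have h2 : (eqToHom e.symm : M ⟶ ModuleCat.of S PUnit) x = 0 := Subsingleton.elim _ _
  have h1 : (eqToHom e : ModuleCat.of S PUnit ⟶ M)
      ((eqToHom e.symm : M ⟶ ModuleCat.of S PUnit) x) = x := by
    show (eqToHom e.symm ≫ eqToHom e : M ⟶ M) x = x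
    rw [eqToHom_trans, eqToHom_refl]
    rfl
  rw [← h1, h2, map_zero]

theorem punit_hom_ext {M N : ModuleCat.{0} S} (e : ModuleCat.of S PUnit = M)
    (f g : M ⟶ N) : f = g := by
  apply ModuleCat.hom_ext; apply LinearMap.ext; intro x
  rw [elem_eq_zero_of_punit S e x, map_zero, map_zero]

theorem precomp_eqToHom_inj {M N P : ModuleCat.{0} S} (e : M = N) {f g : N ⟶ P}
    (h : eqToHom e ≫ f = eqToHom e ≫ g) : f = g := by
  have h2 := congrArg (fun t => eqToHom e.symm ≫ t) h
  simpa only [← Category.assoc, eqToHom_trans, eqToHom_refl, Category.id_comp] using h2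

/-- The map `S → M` sending `1` to `y`. -/
noncomputable def toSingle {M : ModuleCat.{0} S} (y : M) : ModuleCat.of S S ⟶ M :=
  ModuleCat.ofHom (LinearMap.toSpanSingleton S M y)

theorem toSingle_apply {M : ModuleCat.{0} S} (y : M) (s : S) : toSingle S y s = s • y := rfl

theorem compf {A B C : Ch S} (m : A ⟶ B) (m' : B ⟶ C) (n : ℕ) (x : A.X n) :
    (m ≫ m').f n x = m'.f n (m.f n x) := rfl

/-- The chain map `disc S i ⟶ W` classified by `y : W.X i`. -/
noncomputable def discMap (W : Ch S) (i : ℕ) (y : W.X i) : disc S i ⟶ W where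
  f n :=
    if h : n = i then
      eqToHom (show dObj S i n = ModuleCat.of S S by simp [dObj, h]) ≫
        toSingle S y ≫ eqToHom (show W.X i = W.X n by rw [h])
    else if h2 : n + 1 = i then
      eqToHom (show dObj S i n = ModuleCat.of S S by simp [dObj, h2]) ≫
        toSingle S (W.d i n y)
    else 0
  comm' := by
    rintro n j hnj
    obtain rfl : j + 1 = n := hnj
    beta_reduce
    have hd : (disc S i).d (j + 1) j = dD S i j := ChainComplex.of_d _ _ j
    by_cases h1 : j + 1 = i
    · have hj : ¬ (j = i) := by omega
      rw [dif_pos h1, dif_neg hj, dif_pos h1, hd]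
      unfold dD
      rw [dif_pos h1]
      subst h1
      simp only [eqToHom_refl, Category.comp_id, Category.assoc, eqToHom_trans,
        Category.id_comp]
      have hAB : toSingle S y ≫ W.d (j + 1) j = toSingle S (W.d (j + 1) j y) := by
        apply ModuleCat.hom_ext; apply LinearMap.ext_ring
        show W.d (j + 1) j ((1 : S) • y) = (1 : S) • W.d (j + 1) j y
        rw [one_smul, one_smul]
      erw [hAB, ← Category.assoc, eqToHom_trans]
    · have hrhs : dD S i j = 0 := dif_neg h1
      erw [hd, hrhs, zero_comp]
      by_cases h2 : j + 1 + 1 = i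
      · have hj1 : ¬ (j + 1 = i) := h1
        rw [dif_neg hj1, dif_pos h2]
        rw [Category.assoc]
        have : toSingle S (W.d i (j + 1) y) ≫ W.d (j + 1) j = 0 := by
          apply ModuleCat.hom_ext; apply LinearMap.ext_ring
          show W.d (j + 1) j ((1 : S) • W.d i (j + 1) y) = 0
          rw [one_smul]
          have := ConcreteCategory.congr_hom (W.d_comp_d i (j + 1) j) y
          exact this.trans rfl
        rw [this, comp_zero]
      · rw [dif_neg h1, dif_neg h2, zero_comp]

theorem discMap_comp_one (W : Ch S) (i : ℕ) (y : W.X i) :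
    discOneMap S i ≫ (discMap S W i y).f i = toSingle S y := by
  rw [show (discMap S W i y).f i
      = eqToHom (show dObj S i i = ModuleCat.of S S by simp [dObj]) ≫
        toSingle S y ≫ eqToHom rfl from dif_pos rfl]
  unfold discOneMap
  erw [eqToHom_refl, Category.comp_id, ← Category.assoc, eqToHom_trans,
    eqToHom_refl, Category.id_comp]

theorem discMap_f_self (W : Ch S) (i : ℕ) (y : W.X i) :
    (discMap S W i y).f i (discOne S i) = y := by
  show (discOneMap S i ≫ (discMap S W i y).f i) (1 : S) = y
  rw [discMap_comp_one]
  show (1 : S) • y = y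
  rw [one_smul]

/-- The chain map `bdry S (i+1) ⟶ W` classified by a cycle `y : W.X i`. -/
noncomputable def bdryMap (W : Ch S) (i : ℕ) (y : W.X i)
    (hy : ∀ j, i = j + 1 → W.d i j y = 0) : bdry S (i + 1) ⟶ W where
  f n :=
    if h : n = i then
      eqToHom (show bObj S (i + 1) n = ModuleCat.of S S by simp [bObj, h]) ≫
        toSingle S y ≫ eqToHom (show W.X i = W.X n by rw [h])
    else 0
  comm' := by
    rintro n j hnj
    obtain rfl : j + 1 = n := hnj
    beta_reduce
    have hd : (bdry S (i + 1)).d (j + 1) j = 0 := ChainComplex.of_d (bObj S (i + 1)) (fun _ => 0) j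
    rw [hd, zero_comp]
    by_cases h1 : j + 1 = i
    · have hj : ¬ (j = i) := by omega
      rw [dif_pos h1]
      subst h1
      simp only [eqToHom_refl, Category.comp_id, Category.assoc]
      have : toSingle S y ≫ W.d (j + 1) j = 0 := by
        apply ModuleCat.hom_ext; apply LinearMap.ext_ring
        show W.d (j + 1) j ((1 : S) • y) = 0
        rw [one_smul]
        exact hy j rfl
      rw [this, comp_zero]
    · rw [dif_neg h1, zero_comp]

theorem bdryMap_comp_one (W : Ch S) (i : ℕ) (y : W.X i)
    (hy : ∀ j, i = j + 1 → W.d i j y = 0) :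
    bdryOneMap S i ≫ (bdryMap S W i y hy).f i = toSingle S y := by
  rw [show (bdryMap S W i y hy).f i
      = eqToHom (show bObj S (i + 1) i = ModuleCat.of S S by simp [bObj]) ≫
        toSingle S y ≫ eqToHom rfl from dif_pos rfl]
  unfold bdryOneMap
  erw [eqToHom_refl, Category.comp_id, ← Category.assoc, eqToHom_trans,
    eqToHom_refl, Category.id_comp]

theorem bdryMap_f_self (W : Ch S) (i : ℕ) (y : W.X i)
    (hy : ∀ j, i = j + 1 → W.d i j y = 0) :
    (bdryMap S W i y hy).f i (bdryOne S i) = y := by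
  show (bdryOneMap S i ≫ (bdryMap S W i y hy).f i) (1 : S) = y
  rw [bdryMap_comp_one]
  show (1 : S) • y = y
  rw [one_smul]

/-- Two maps out of `bdry S 0` are equal. -/
theorem bdry0_hom_ext (W : Ch S) (f g : bdry S 0 ⟶ W) : f = g := by
  apply HomologicalComplex.hom_ext
  intro n
  exact punit_hom_ext S (show ModuleCat.of S PUnit = bObj S 0 n by simp [bObj]) _ _

/-- Two maps out of `bdry S (i+1)` agreeing on the canonical generator are equal. -/
theorem bdry_hom_ext (W : Ch S) (i : ℕ) (f g : bdry S (i + 1) ⟶ W)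
    (hfg : f.f i (bdryOne S i) = g.f i (bdryOne S i)) : f = g := by
  apply HomologicalComplex.hom_ext
  intro n
  rcases eq_or_ne n i with rfl | hn
  · apply precomp_eqToHom_inj S
      (e := show ModuleCat.of S S = bObj S (n + 1) n by simp [bObj])
    apply ModuleCat.hom_ext; apply LinearMap.ext_ring
    exact hfg
  · exact punit_hom_ext S
      (show ModuleCat.of S PUnit = bObj S (i + 1) n by
        simp only [bObj]; rw [if_neg]; omega) _ _

/-- Two maps out of `disc S i` agreeing on the canonical generator are equal. -/
theorem disc_hom_ext (W : Ch S) (i : ℕ) (f g : disc S i ⟶ W)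
    (hfg : f.f i (discOne S i) = g.f i (discOne S i)) : f = g := by
  have htop : f.f i = g.f i := by
    apply precomp_eqToHom_inj S
      (e := show ModuleCat.of S S = dObj S i i by simp [dObj])
    apply ModuleCat.hom_ext; apply LinearMap.ext_ring
    exact hfg
  apply HomologicalComplex.hom_ext
  intro n
  rcases eq_or_ne n i with rfl | hn
  · exact htop
  rcases eq_or_ne (n + 1) i with h2 | h2
  · subst h2
    have hd : (disc S (n + 1)).d (n + 1) n = dD S (n + 1) n :=
      ChainComplex.of_d _ _ n
    have hdd : dD S (n + 1) n =
        eqToHom (show dObj S (n + 1) (n + 1) = dObj S (n + 1) n by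
          simp [dObj]) := dif_pos rfl
    apply precomp_eqToHom_inj S
      (e := show dObj S (n + 1) (n + 1) = dObj S (n + 1) n by simp [dObj])
    have hcf := f.comm (n + 1) n
    have hcg := g.comm (n + 1) n
    rw [hd, hdd] at hcf hcg
    erw [← hcf, ← hcg, htop]
  · exact punit_hom_ext S
      (show ModuleCat.of S PUnit = dObj S i n by
        simp only [dObj]; rw [if_neg]; omega) _ _

/-- The image of the boundary generator under `incl ≫ m`. -/
theorem incl_comp_one (W : Ch S) (i : ℕ) (m : disc S (i + 1) ⟶ W) :
    (incl S (i + 1) ≫ m).f i (bdryOne S i)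
      = W.d (i + 1) i (m.f (i + 1) (discOne S (i + 1))) := by
  have h1 : (incl S (i + 1) ≫ m).f i (bdryOne S i)
      = m.f i ((incl S (i + 1)).f i (bdryOne S i)) := rfl
  have hk : W.d (i + 1) i (m.f (i + 1) (discOne S (i + 1)))
      = m.f i ((disc S (i + 1)).d (i + 1) i (discOne S (i + 1))) :=
    ConcreteCategory.congr_hom (m.comm (i + 1) i) (discOne S (i + 1))
  rw [h1, incl_one_eq_d_one, ← hk]

theorem lift_congr {Y Z : Ch S} {f : Y ⟶ Z} (ψ : ChLiftChoice S f) (i : ℕ)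
    {h1 h2 : bdry S i ⟶ Y} {k1 k2 : disc S i ⟶ Z} (eh : h1 = h2) (ek : k1 = k2)
    (w1 : h1 ≫ f = incl S i ≫ k1) (w2 : h2 ≫ f = incl S i ≫ k2) :
    ψ.lift i h1 k1 w1 = ψ.lift i h2 k2 w2 := by
  subst eh; subst ek; rfl

theorem eps_zero_single (a : QGen S X 0) (b : S) :
    (qStep S X 0).eps (Finsupp.single a b : QGen S X 0 →₀ S)
      = b • (show (X.X 0 : Type) from a) := by
  show Finsupp.linearCombination S (id : (X.X 0 : Type) → X.X 0)
      (Finsupp.single a b) = _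
  erw [Finsupp.linearCombination_single]
  rfl


/-! ## The inclusion-of-generators choice of liftings on `Qeps` -/

theorem fac_right_apply {Y Z : Ch S} {f : Y ⟶ Z} (ψ : ChLiftChoice S f) (i : ℕ)
    (h : bdry S i ⟶ Y) (k : disc S i ⟶ Z) (w : h ≫ f = incl S i ≫ k) (n : ℕ)
    (x : (disc S i).X n) :
    f.f n ((ψ.lift i h k w).f n x) = k.f n x :=
  ConcreteCategory.congr_hom
    (congrArg (fun m => HomologicalComplex.Hom.f m n) (ψ.fac_right i h k w)) x

theorem lift_d_one {Y Z : Ch S} {f : Y ⟶ Z} (ψ : ChLiftChoice S f) (i : ℕ)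
    (h : bdry S (i + 1) ⟶ Y) (k : disc S (i + 1) ⟶ Z)
    (w : h ≫ f = incl S (i + 1) ≫ k) :
    Y.d (i + 1) i ((ψ.lift (i + 1) h k w).f (i + 1) (discOne S (i + 1)))
      = h.f i (bdryOne S i) := by
  have h1 : Y.d (i + 1) i ((ψ.lift (i + 1) h k w).f (i + 1) (discOne S (i + 1)))
      = (ψ.lift (i + 1) h k w).f i
          ((disc S (i + 1)).d (i + 1) i (discOne S (i + 1))) :=
    ConcreteCategory.congr_hom ((ψ.lift (i + 1) h k w).comm (i + 1) i) (discOne S (i + 1))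
  rw [h1, ← incl_one_eq_d_one]
  exact ConcreteCategory.congr_hom
    (congrArg (fun m => HomologicalComplex.Hom.f m i) (ψ.fac_left (i + 1) h k w))
    (bdryOne S i)

/-- The choice of liftings on `ε_X : QX ⟶ X` given by inclusion of generators. -/
noncomputable def phi (X : Ch S) : ChLiftChoice S (Qeps S X) where
  lift i h k w :=
    discMap S (Qc S X) i (Finsupp.single (canonGen S X i h k w) (1 : S))
  fac_left := by
    intro i h k w
    beta_reduce
    cases i with
    | zero => exact bdry0_hom_ext S (Qc S X) _ _
    | succ i =>
      apply bdry_hom_ext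
      erw [incl_comp_one, discMap_f_self, Qc_d, Qd_single, one_smul]
      rfl
  fac_right := by
    intro i h k w
    beta_reduce
    apply disc_hom_ext
    erw [compf, discMap_f_self]
    cases i with
    | zero =>
      show (qStep S X 0).eps (Finsupp.single (canonGen S X 0 h k w) 1) = _
      erw [eps_zero_single, one_smul]
      rfl
    | succ i =>
      show (qStep S X (i + 1)).eps (Finsupp.single (canonGen S X (i + 1) h k w) 1) = _
      rw [eps_single, one_smul]
      rfl

theorem phi_lift_one (X : Ch S) (i : ℕ) (h : bdry S i ⟶ Qc S X) (k : disc S i ⟶ X)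
    (w : h ≫ Qeps S X = incl S i ≫ k) :
    ((phi S X).lift i h k w).f i (discOne S i)
      = Finsupp.single (canonGen S X i h k w) 1 :=
  discMap_f_self S (Qc S X) i _

/-! ## The universal map `u : QX ⟶ Y` -/

theorem sqZero (Y : Ch S) (g : Y ⟶ X) (x : X.X 0) :
    (0 : bdry S 0 ⟶ Y) ≫ g = incl S 0 ≫ discMap S X 0 x :=
  bdry0_hom_ext S X _ _

noncomputable def uZero (Y : Ch S) (g : Y ⟶ X) (ψ : ChLiftChoice S g) :
    (QGen S X 0 →₀ S) →ₗ[S] Y.X 0 :=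
  Finsupp.linearCombination S (fun a : QGen S X 0 =>
    (ψ.lift 0 0 (discMap S X 0 (show (X.X 0 : Type) from a))
      (sqZero S X Y g _)).f 0 (discOne S 0))

theorem uZero_single (Y : Ch S) (g : Y ⟶ X) (ψ : ChLiftChoice S g)
    (a : QGen S X 0) :
    uZero S X Y g ψ (Finsupp.single a (1 : S))
      = (ψ.lift 0 0 (discMap S X 0 (show (X.X 0 : Type) from a))
          (sqZero S X Y g _)).f 0 (discOne S 0) := by
  unfold uZero
  rw [Finsupp.linearCombination_single, one_smul]

theorem uZero_eps (Y : Ch S) (g : Y ⟶ X) (ψ : ChLiftChoice S g)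
    (v : QGen S X 0 →₀ S) :
    g.f 0 (uZero S X Y g ψ v) = (qStep S X 0).eps v := by
  have h : LinearMap.comp (g.f 0).hom (uZero S X Y g ψ) = (qStep S X 0).eps := by
    apply Finsupp.lhom_ext
    intro a b
    refine Eq.trans ?_ (eps_zero_single S X a b).symm
    show g.f 0 (uZero S X Y g ψ (Finsupp.single a b)) = b • (show (X.X 0 : Type) from a)
    have hb : Finsupp.single a b = b • Finsupp.single a (1 : S) := by
      rw [Finsupp.smul_single, smul_eq_mul, mul_one]
    rw [hb, map_smul, map_smul, uZero_single]
    congr 1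
    rw [fac_right_apply]
    exact discMap_f_self S X 0 _
  exact DFunLike.congr_fun h v

noncomputable def genBdry (Y : Ch S) (i : ℕ) (p : (QGen S X i →₀ S) →ₗ[S] Y.X i)
    (hpc : ∀ v ∈ (qStep S X i).Z, ∀ j, i = j + 1 → Y.d i j (p v) = 0)
    (gen : QGen S X (i + 1)) : bdry S (i + 1) ⟶ Y :=
  bdryMap S Y i (p (qDestruct S X i gen).1.2.1)
    (fun j hij => hpc _ (qDestruct S X i gen).1.2.2 j hij)

theorem genSquare (Y : Ch S) (g : Y ⟶ X) (i : ℕ)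
    (p : (QGen S X i →₀ S) →ₗ[S] Y.X i)
    (hpe : ∀ v, g.f i (p v) = (qStep S X i).eps v)
    (hpc : ∀ v ∈ (qStep S X i).Z, ∀ j, i = j + 1 → Y.d i j (p v) = 0)
    (gen : QGen S X (i + 1)) :
    genBdry S X Y i p hpc gen ≫ g
      = incl S (i + 1) ≫ discMap S X (i + 1) (qDestruct S X i gen).1.1 := by
  apply bdry_hom_ext
  rw [incl_comp_one, discMap_f_self, compf]
  have hb : (genBdry S X Y i p hpc gen).f i (bdryOne S i)
      = p (qDestruct S X i gen).1.2.1 := bdryMap_f_self S Y i _ _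
  erw [hb, hpe]
  exact (qDestruct S X i gen).2

noncomputable def uNext (Y : Ch S) (g : Y ⟶ X) (ψ : ChLiftChoice S g) (i : ℕ)
    (p : (QGen S X i →₀ S) →ₗ[S] Y.X i)
    (hpe : ∀ v, g.f i (p v) = (qStep S X i).eps v)
    (hpc : ∀ v ∈ (qStep S X i).Z, ∀ j, i = j + 1 → Y.d i j (p v) = 0) :
    (QGen S X (i + 1) →₀ S) →ₗ[S] Y.X (i + 1) :=
  Finsupp.linearCombination S (fun gen =>
    (ψ.lift (i + 1) (genBdry S X Y i p hpc gen)
      (discMap S X (i + 1) (qDestruct S X i gen).1.1)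
      (genSquare S X Y g i p hpe hpc gen)).f (i + 1) (discOne S (i + 1)))

theorem uNext_single (Y : Ch S) (g : Y ⟶ X) (ψ : ChLiftChoice S g) (i : ℕ)
    (p : (QGen S X i →₀ S) →ₗ[S] Y.X i)
    (hpe : ∀ v, g.f i (p v) = (qStep S X i).eps v)
    (hpc : ∀ v ∈ (qStep S X i).Z, ∀ j, i = j + 1 → Y.d i j (p v) = 0)
    (gen : QGen S X (i + 1)) :
    uNext S X Y g ψ i p hpe hpc (Finsupp.single gen (1 : S))
      = (ψ.lift (i + 1) (genBdry S X Y i p hpc gen)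
          (discMap S X (i + 1) (qDestruct S X i gen).1.1)
          (genSquare S X Y g i p hpe hpc gen)).f (i + 1) (discOne S (i + 1)) := by
  unfold uNext
  rw [Finsupp.linearCombination_single, one_smul]

theorem uNext_eps (Y : Ch S) (g : Y ⟶ X) (ψ : ChLiftChoice S g) (i : ℕ)
    (p : (QGen S X i →₀ S) →ₗ[S] Y.X i)
    (hpe : ∀ v, g.f i (p v) = (qStep S X i).eps v)
    (hpc : ∀ v ∈ (qStep S X i).Z, ∀ j, i = j + 1 → Y.d i j (p v) = 0)
    (v : QGen S X (i + 1) →₀ S) :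
    g.f (i + 1) (uNext S X Y g ψ i p hpe hpc v) = (qStep S X (i + 1)).eps v := by
  have h : LinearMap.comp (g.f (i + 1)).hom (uNext S X Y g ψ i p hpe hpc)
      = (qStep S X (i + 1)).eps := by
    apply Finsupp.lhom_ext
    intro a b
    refine Eq.trans ?_ (eps_single S X i a b).symm
    show g.f (i + 1) (uNext S X Y g ψ i p hpe hpc (Finsupp.single a b))
      = b • (qDestruct S X i a).1.1
    have hb : Finsupp.single a b = b • Finsupp.single a (1 : S) := by
      rw [Finsupp.smul_single, smul_eq_mul, mul_one]
    rw [hb, map_smul, map_smul, uNext_single]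
    congr 1
    rw [fac_right_apply]
    exact discMap_f_self S X (i + 1) _
  exact DFunLike.congr_fun h v

theorem uNext_d (Y : Ch S) (g : Y ⟶ X) (ψ : ChLiftChoice S g) (i : ℕ)
    (p : (QGen S X i →₀ S) →ₗ[S] Y.X i)
    (hpe : ∀ v, g.f i (p v) = (qStep S X i).eps v)
    (hpc : ∀ v ∈ (qStep S X i).Z, ∀ j, i = j + 1 → Y.d i j (p v) = 0)
    (v : QGen S X (i + 1) →₀ S) :
    Y.d (i + 1) i (uNext S X Y g ψ i p hpe hpc v) = p (Qd S X i v) := by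
  have h : LinearMap.comp (Y.d (i + 1) i).hom (uNext S X Y g ψ i p hpe hpc)
      = LinearMap.comp p (Qd S X i) := by
    apply Finsupp.lhom_ext
    intro a b
    show Y.d (i + 1) i (uNext S X Y g ψ i p hpe hpc (Finsupp.single a b))
      = p (Qd S X i (Finsupp.single a b))
    erw [Qd_single, map_smul]
    have hb : Finsupp.single a b = b • Finsupp.single a (1 : S) := by
      rw [Finsupp.smul_single, smul_eq_mul, mul_one]
    rw [hb, map_smul, map_smul, uNext_single]
    congr 1
    rw [lift_d_one]
    exact bdryMap_f_self S Y i _ _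
  exact DFunLike.congr_fun h v

noncomputable def uStep (Y : Ch S) (g : Y ⟶ X) (ψ : ChLiftChoice S g) :
    ∀ i : ℕ, {u : (QGen S X i →₀ S) →ₗ[S] Y.X i //
      (∀ v, g.f i (u v) = (qStep S X i).eps v) ∧
      (∀ v ∈ (qStep S X i).Z, ∀ j, i = j + 1 → Y.d i j (u v) = 0)}
  | 0 => ⟨uZero S X Y g ψ, uZero_eps S X Y g ψ,
      fun _ _ j hj => absurd hj (by omega)⟩
  | (i + 1) =>
    let p := uStep Y g ψ i
    ⟨uNext S X Y g ψ i p.1 p.2.1 p.2.2, uNext_eps S X Y g ψ i p.1 p.2.1 p.2.2,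
      by
        intro v hv j hj
        obtain rfl : i = j := by omega
        rw [uNext_d S X Y g ψ i p.1 p.2.1 p.2.2 v]
        have hz : Qd S X i v = 0 := by
          have hv' := hv
          exact LinearMap.mem_ker.mp (by exact hv')
        rw [hz, map_zero]⟩

theorem uStep_zero_fst (Y : Ch S) (g : Y ⟶ X) (ψ : ChLiftChoice S g) :
    (uStep S X Y g ψ 0).1 = uZero S X Y g ψ := rfl

theorem uStep_succ_fst (Y : Ch S) (g : Y ⟶ X) (ψ : ChLiftChoice S g) (i : ℕ) :
    (uStep S X Y g ψ (i + 1)).1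
      = uNext S X Y g ψ i (uStep S X Y g ψ i).1 (uStep S X Y g ψ i).2.1
          (uStep S X Y g ψ i).2.2 := rfl

/-- The universal map `u : QX ⟶ Y`. -/
noncomputable def uHom (Y : Ch S) (g : Y ⟶ X) (ψ : ChLiftChoice S g) :
    Qc S X ⟶ Y where
  f i := ModuleCat.ofHom (X := QGen S X i →₀ S) (Y := Y.X i) (uStep S X Y g ψ i).1
  comm' := by
    rintro i j hij
    obtain rfl : j + 1 = i := hij
    apply ModuleCat.hom_ext
    apply LinearMap.ext
    intro v
    show Y.d (j + 1) j ((uStep S X Y g ψ (j + 1)).1 v)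
      = (uStep S X Y g ψ j).1 ((Qc S X).d (j + 1) j v)
    erw [Qc_d, uStep_succ_fst, uNext_d]

theorem uHom_f (Y : Ch S) (g : Y ⟶ X) (ψ : ChLiftChoice S g) (i : ℕ) :
    (uHom S X Y g ψ).f i = ModuleCat.ofHom (X := QGen S X i →₀ S) (Y := Y.X i) (uStep S X Y g ψ i).1 := rfl

theorem uHom_comp (Y : Ch S) (g : Y ⟶ X) (ψ : ChLiftChoice S g) :
    uHom S X Y g ψ ≫ g = Qeps S X := by
  apply HomologicalComplex.hom_ext
  intro i
  apply ModuleCat.hom_ext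
  apply LinearMap.ext
  intro v
  exact (uStep S X Y g ψ i).2.1 v

theorem uHom_compat (Y : Ch S) (g : Y ⟶ X) (ψ : ChLiftChoice S g) (i : ℕ)
    (h : bdry S i ⟶ Qc S X) (k : disc S i ⟶ X) (w : h ≫ Qeps S X = incl S i ≫ k)
    (w₂ : (h ≫ uHom S X Y g ψ) ≫ g = incl S i ≫ k) :
    (phi S X).lift i h k w ≫ uHom S X Y g ψ
      = ψ.lift i (h ≫ uHom S X Y g ψ) k w₂ := by
  cases i with
  | zero =>
    apply disc_hom_ext
    rw [compf, phi_lift_one]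
    show uZero S X Y g ψ (Finsupp.single (canonGen S X 0 h k w) 1) = _
    rw [uZero_single]
    have e1 : (0 : bdry S 0 ⟶ Y) = h ≫ uHom S X Y g ψ := bdry0_hom_ext S Y _ _
    have e2 : discMap S X 0 (show (X.X 0 : Type) from canonGen S X 0 h k w) = k := by
      apply disc_hom_ext
      rw [discMap_f_self]
      rfl
    exact congrArg (fun m : disc S 0 ⟶ Y => HomologicalComplex.Hom.f m 0 (discOne S 0))
      (lift_congr S ψ 0 e1 e2 _ w₂)
  | succ i =>
    apply disc_hom_ext
    rw [compf, phi_lift_one]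
    show uNext S X Y g ψ i (uStep S X Y g ψ i).1 (uStep S X Y g ψ i).2.1
        (uStep S X Y g ψ i).2.2
        (Finsupp.single (canonGen S X (i + 1) h k w) 1) = _
    rw [uNext_single]
    have e1 : genBdry S X Y i (uStep S X Y g ψ i).1 (uStep S X Y g ψ i).2.2
        (canonGen S X (i + 1) h k w) = h ≫ uHom S X Y g ψ := by
      apply bdry_hom_ext
      have hb : (genBdry S X Y i (uStep S X Y g ψ i).1 (uStep S X Y g ψ i).2.2
          (canonGen S X (i + 1) h k w)).f i (bdryOne S i)
          = (uStep S X Y g ψ i).1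
              (qDestruct S X i (canonGen S X (i + 1) h k w)).1.2.1 :=
        bdryMap_f_self S Y i _ _
      rw [hb]
      rfl
    have e2 : discMap S X (i + 1)
        (qDestruct S X i (canonGen S X (i + 1) h k w)).1.1 = k := by
      apply disc_hom_ext
      rw [discMap_f_self]
      rfl
    exact congrArg
      (fun m : disc S (i + 1) ⟶ Y => HomologicalComplex.Hom.f m (i + 1) (discOne S (i + 1)))
      (lift_congr S ψ (i + 1) e1 e2 _ w₂)

theorem compat_eval (Y : Ch S) (g : Y ⟶ X) (ψ : ChLiftChoice S g)
    (u' : Qc S X ⟶ Y) (i : ℕ) (h : bdry S i ⟶ Qc S X) (k : disc S i ⟶ X)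
    (w : h ≫ Qeps S X = incl S i ≫ k) (w₂ : (h ≫ u') ≫ g = incl S i ≫ k)
    (hc : (phi S X).lift i h k w ≫ u' = ψ.lift i (h ≫ u') k w₂) :
    u'.f i (Finsupp.single (canonGen S X i h k w) (1 : S))
      = (ψ.lift i (h ≫ u') k w₂).f i (discOne S i) := by
  have e := congrArg (fun m : disc S i ⟶ Y => HomologicalComplex.Hom.f m i (discOne S i)) hc
  rw [← phi_lift_one S X i h k w]
  exact e


theorem unique_val (Y : Ch S) (g : Y ⟶ X) (ψ : ChLiftChoice S g)
    (u' : Qc S X ⟶ Y) (hu' : u' ≫ g = Qeps S X)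
    (hcompat' : ∀ (i : ℕ) (h : bdry S i ⟶ Qc S X) (k : disc S i ⟶ X)
      (w : h ≫ Qeps S X = incl S i ≫ k),
      (phi S X).lift i h k w ≫ u'
        = ψ.lift i (h ≫ u') k (by rw [Category.assoc, hu', w]))
    (i : ℕ) (h : bdry S i ⟶ Qc S X) (k : disc S i ⟶ X)
    (w : h ≫ Qeps S X = incl S i ≫ k)
    (hhu : h ≫ u' = h ≫ uHom S X Y g ψ) :
    u'.f i (Finsupp.single (canonGen S X i h k w) (1 : S))
      = (uHom S X Y g ψ).f i (Finsupp.single (canonGen S X i h k w) (1 : S)) := by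
  have e1 := compat_eval S X Y g ψ u' i h k w
    (by rw [Category.assoc, hu', w]) (hcompat' i h k w)
  have e2 := compat_eval S X Y g ψ (uHom S X Y g ψ) i h k w
    (by rw [Category.assoc, uHom_comp S X Y g ψ, w])
    (uHom_compat S X Y g ψ i h k w _)
  rw [e1, e2]
  exact congrArg (fun m : disc S i ⟶ Y => HomologicalComplex.Hom.f m i (discOne S i))
    (lift_congr S ψ i hhu rfl _ _)

/-- `ε_X : QX ⟶ X`, equipped with the inclusion-of-generators
choice of liftings, is an initial object of `AAF/X`: for every chain map
`g : Y ⟶ X` equipped with a choice of liftings `ψ` there is a unique morphism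
`u` over `X` commuting with the chosen liftings. -/
theorem statement5 (X : Ch S) :
    ∃ φ : ChLiftChoice S (Qeps S X),
      (∀ (i : ℕ) (h : bdry S i ⟶ Qc S X) (k : disc S i ⟶ X)
        (w : h ≫ Qeps S X = incl S i ≫ k),
        (φ.lift i h k w).f i (discOne S i)
          = Finsupp.single (canonGen S X i h k w) 1) ∧
      ∀ (Y : Ch S) (g : Y ⟶ X) (ψ : ChLiftChoice S g),
        ∃! u : Qc S X ⟶ Y,
          ∃ hu : u ≫ g = Qeps S X,
            ∀ (i : ℕ) (h : bdry S i ⟶ Qc S X) (k : disc S i ⟶ X)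
              (w : h ≫ Qeps S X = incl S i ≫ k),
              φ.lift i h k w ≫ u
                = ψ.lift i (h ≫ u) k (by rw [Category.assoc, hu, w]) := by
  refine ⟨phi S X, fun i h k w => phi_lift_one S X i h k w, ?_⟩
  intro Y g ψ
  have hu : uHom S X Y g ψ ≫ g = Qeps S X := uHom_comp S X Y g ψ
  refine ⟨uHom S X Y g ψ, ⟨hu, fun i h k w => uHom_compat S X Y g ψ i h k w _⟩, ?_⟩
  rintro u' ⟨hu', hcompat'⟩
  have key : ∀ i, u'.f i = (uHom S X Y g ψ).f i := by
    intro i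
    induction i with
    | zero =>
      refine ModuleCat.hom_ext (Finsupp.lhom_ext (fun a b => ?_))
      have hb : (Finsupp.single a b : QGen S X 0 →₀ S) = b • Finsupp.single a (1 : S) := by
        rw [Finsupp.smul_single, smul_eq_mul, mul_one]
      show u'.f 0 (Finsupp.single a b) = (uHom S X Y g ψ).f 0 (Finsupp.single a b)
      erw [hb, map_smul, map_smul]
      congr 1
      have w0 : (0 : bdry S 0 ⟶ Qc S X) ≫ Qeps S X
          = incl S 0 ≫ discMap S X 0 (show (X.X 0 : Type) from a) :=
        bdry0_hom_ext S X _ _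
      have hhu : (0 : bdry S 0 ⟶ Qc S X) ≫ u'
          = (0 : bdry S 0 ⟶ Qc S X) ≫ uHom S X Y g ψ := bdry0_hom_ext S Y _ _
      have hv := unique_val S X Y g ψ u' hu' hcompat' 0 _ _ w0 hhu
      have hgen : canonGen S X 0 (0 : bdry S 0 ⟶ Qc S X)
          (discMap S X 0 (show (X.X 0 : Type) from a)) w0 = (show QGen S X 0 from a) :=
        discMap_f_self S X 0 _
      rw [hgen] at hv
      exact hv
    | succ i ih =>
      refine ModuleCat.hom_ext (Finsupp.lhom_ext (fun a b => ?_))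
      have hb : (Finsupp.single a b : QGen S X (i + 1) →₀ S)
          = b • Finsupp.single a (1 : S) := by
        rw [Finsupp.smul_single, smul_eq_mul, mul_one]
      show u'.f (i + 1) (Finsupp.single a b) = (uHom S X Y g ψ).f (i + 1) (Finsupp.single a b)
      erw [hb, map_smul, map_smul]
      congr 1
      have hcycQ : ∀ j, i = j + 1 → (Qc S X).d i j ((qDestruct S X i a).1.2.1) = 0 := by
        intro j hij
        subst hij
        exact (Qc_d S X j _).trans
          (show Qd S X j _ = 0 from LinearMap.mem_ker.mp (by exact (qDestruct S X (j + 1) a).1.2.2))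
      have wQ : bdryMap S (Qc S X) i ((qDestruct S X i a).1.2.1) hcycQ ≫ Qeps S X
          = incl S (i + 1) ≫ discMap S X (i + 1) (qDestruct S X i a).1.1 := by
        apply bdry_hom_ext
        erw [incl_comp_one, discMap_f_self, compf, bdryMap_f_self]
        exact (qDestruct S X i a).2
      have hhu : bdryMap S (Qc S X) i ((qDestruct S X i a).1.2.1) hcycQ ≫ u'
          = bdryMap S (Qc S X) i ((qDestruct S X i a).1.2.1) hcycQ ≫ uHom S X Y g ψ := by
        apply bdry_hom_ext
        rw [compf, compf, ih]
      have hv := unique_val S X Y g ψ u' hu' hcompat' (i + 1) _ _ wQ hhu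
      have hgen : canonGen S X (i + 1)
          (bdryMap S (Qc S X) i ((qDestruct S X i a).1.2.1) hcycQ)
          (discMap S X (i + 1) (qDestruct S X i a).1.1) wQ = a := by
        exact Subtype.ext (Prod.ext (discMap_f_self S X (i + 1) _)
          (Subtype.ext (bdryMap_f_self S (Qc S X) i _ _)))
      rw [hgen] at hv
      exact hv
  apply HomologicalComplex.hom_ext
  exact key


end Statement5
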